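/- arXiv:1610.09612 — 3 statements merged into one kernel-verified Lean document; each statement's English description precedes it below -/
import Mathlib

section
/- The assignment g1 -> (1 3), g2 -> (2 3), g3 -> (3 4), g3' -> (3 4), g4 -> (4 5) respects all the defining relations of G_V and hence extends to a group homomorphism phi : G_V -> S_5, and this homomorphism is surjective. -/
namespace Stmt1

/-- Generators: `0 ↦ g1`, `1 ↦ g2`, `2 ↦ g3`, `3 ↦ g3'`, `4 ↦ g4`. -/
def g (i : Fin 5) : FreeGroup (Fin 5) := FreeGroup.of i

/-- The braid relator `x y x (y x y)⁻¹`, i.e. `<x,y> = e`. -/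
def braid (x y : FreeGroup (Fin 5)) : FreeGroup (Fin 5) := x * y * x * (y * x * y)⁻¹

/-- The commutator relator `x y x⁻¹ y⁻¹`, i.e. `[x,y] = e`. -/
def comm (x y : FreeGroup (Fin 5)) : FreeGroup (Fin 5) := x * y * x⁻¹ * y⁻¹

/-- Relators of the group `G_V` from Theorem 3.3 (union of the Veronese surface `V₂`
and a plane).  Here `g 0 = g1`, `g 1 = g2`, `g 2 = g3`, `g 3 = g3'`, `g 4 = g4`. -/
def rels : Set (FreeGroup (Fin 5)) :=
  { (g 0) ^ 2, (g 1) ^ 2, (g 2) ^ 2, (g 3) ^ 2, (g 4) ^ 2,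
    braid (g 0) (g 1),
    braid (g 1) ((g 2)⁻¹ * (g 3)⁻¹ * g 0 * g 3 * g 2),
    braid (g 1) (g 3 * g 2 * g 0 * (g 2)⁻¹ * (g 3)⁻¹),
    braid (g 1) (g 3),
    braid (g 1) (g 3 * g 2 * (g 3)⁻¹),
    braid (g 1) (g 3 * g 2 * g 3 * (g 2)⁻¹ * (g 3)⁻¹),
    braid (g 0) (g 3),
    braid (g 0) (g 3 * g 2 * (g 3)⁻¹),
    braid (g 0) (g 3 * g 2 * g 3 * (g 2)⁻¹ * (g 3)⁻¹),
    braid (g 4) (g 3),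
    braid (g 4) (g 3 * g 2 * (g 3)⁻¹),
    braid (g 4) (g 3 * g 2 * g 3 * (g 2)⁻¹ * (g 3)⁻¹),
    comm (g 0) (g 4), comm (g 1) (g 4), comm (g 3 * g 2) (g 4),
    (g 1 * (g 2)⁻¹ * (g 3)⁻¹ * g 0 * g 3 * g 2 * g 0 * g 1 * (g 0)⁻¹ * (g 2)⁻¹ * (g 3)⁻¹
        * (g 0)⁻¹ * g 3 * g 2 * (g 1)⁻¹)
      * ((g 2)⁻¹ * (g 3)⁻¹ * g 1 * g 3 * g 2)⁻¹,
    (g 4) ^ 2 * g 1 * g 3 * g 2 * g 1 * (g 2)⁻¹ * (g 3)⁻¹ * g 0 * g 3 * g 2 * g 0 }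

/-- The presented group `G_V`. -/
abbrev GV := PresentedGroup rels

/-- The target assignment in `S₅`. -/
private def fV : Fin 5 → Equiv.Perm (Fin 5) :=
  ![Equiv.swap 0 2, Equiv.swap 1 2, Equiv.swap 2 3, Equiv.swap 2 3, Equiv.swap 3 4]

private lemma hfV : ∀ r ∈ rels, FreeGroup.lift fV r = 1 := by
  intro r hr
  simp only [rels, Set.mem_insert_iff, Set.mem_singleton_iff] at hr
  rcases hr with rfl|rfl|rfl|rfl|rfl|rfl|rfl|rfl|rfl|rfl|rfl|rfl|rfl|rfl|rfl|rfl|rfl|rfl|rfl|rfl|rfl|rfl <;>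
    · simp only [g, braid, comm, map_mul, map_inv, map_pow, FreeGroup.lift_apply_of]
      decide

/-- Theorem 3.3 (first step): the assignment `g1 ↦ (1 3)`, `g2 ↦ (2 3)`, `g3 ↦ (3 4)`,
`g3' ↦ (3 4)`, `g4 ↦ (4 5)` extends to a group homomorphism `φ : G_V → S₅`, which is
surjective. -/
theorem exists_surjective_hom :
    ∃ φ : GV →* Equiv.Perm (Fin 5),
      φ (PresentedGroup.of 0) = Equiv.swap 0 2 ∧
      φ (PresentedGroup.of 1) = Equiv.swap 1 2 ∧
      φ (PresentedGroup.of 2) = Equiv.swap 2 3 ∧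
      φ (PresentedGroup.of 3) = Equiv.swap 2 3 ∧
      φ (PresentedGroup.of 4) = Equiv.swap 3 4 ∧
      Function.Surjective φ := by
  refine ⟨PresentedGroup.toGroup hfV, ?_, ?_, ?_, ?_, ?_, ?_⟩
  · exact (PresentedGroup.toGroup.of hfV).trans (by decide)
  · exact (PresentedGroup.toGroup.of hfV).trans (by decide)
  · exact (PresentedGroup.toGroup.of hfV).trans (by decide)
  · exact (PresentedGroup.toGroup.of hfV).trans (by decide)
  · exact (PresentedGroup.toGroup.of hfV).trans (by decide)
  · set φ := PresentedGroup.toGroup hfV with hφ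
    rw [← MonoidHom.range_eq_top, eq_top_iff, ← Equiv.Perm.closure_isSwap,
      Subgroup.closure_le]
    have ha : Equiv.swap 0 2 ∈ φ.range :=
      ⟨PresentedGroup.of 0, (PresentedGroup.toGroup.of hfV).trans (by decide)⟩
    have hb : Equiv.swap 1 2 ∈ φ.range :=
      ⟨PresentedGroup.of 1, (PresentedGroup.toGroup.of hfV).trans (by decide)⟩
    have hc : Equiv.swap 2 3 ∈ φ.range :=
      ⟨PresentedGroup.of 2, (PresentedGroup.toGroup.of hfV).trans (by decide)⟩
    have hd : Equiv.swap 3 4 ∈ φ.range :=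
      ⟨PresentedGroup.of 4, (PresentedGroup.toGroup.of hfV).trans (by decide)⟩
    have k01 : Equiv.swap (0:Fin 5) 1 ∈ φ.range := by
      rw [show Equiv.swap (0:Fin 5) 1 = Equiv.swap 0 2 * Equiv.swap 1 2 * Equiv.swap 0 2 by decide]
      exact mul_mem (mul_mem ha hb) ha
    have k03 : Equiv.swap (0:Fin 5) 3 ∈ φ.range := by
      rw [show Equiv.swap (0:Fin 5) 3 = Equiv.swap 2 3 * Equiv.swap 0 2 * Equiv.swap 2 3 by decide]
      exact mul_mem (mul_mem hc ha) hc
    have k13 : Equiv.swap (1:Fin 5) 3 ∈ φ.range := by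
      rw [show Equiv.swap (1:Fin 5) 3 = Equiv.swap 2 3 * Equiv.swap 1 2 * Equiv.swap 2 3 by decide]
      exact mul_mem (mul_mem hc hb) hc
    have k24 : Equiv.swap (2:Fin 5) 4 ∈ φ.range := by
      rw [show Equiv.swap (2:Fin 5) 4 = Equiv.swap 3 4 * Equiv.swap 2 3 * Equiv.swap 3 4 by decide]
      exact mul_mem (mul_mem hd hc) hd
    have k04 : Equiv.swap (0:Fin 5) 4 ∈ φ.range := by
      rw [show Equiv.swap (0:Fin 5) 4 = Equiv.swap 3 4 * Equiv.swap 0 3 * Equiv.swap 3 4 by decide]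
      exact mul_mem (mul_mem hd k03) hd
    have k14 : Equiv.swap (1:Fin 5) 4 ∈ φ.range := by
      rw [show Equiv.swap (1:Fin 5) 4 = Equiv.swap 3 4 * Equiv.swap 1 3 * Equiv.swap 3 4 by decide]
      exact mul_mem (mul_mem hd k13) hd
    have key : ∀ x y : Fin 5, x < y → Equiv.swap x y ∈ φ.range := by
      intro x y h
      fin_cases x <;> fin_cases y <;>
        first
          | exact absurd h (by decide)
          | exact k01 | exact ha | exact k03 | exact k04
          | exact hb | exact k13 | exact k14
          | exact hc | exact k24 | exact hd
    rintro σ ⟨x, y, hxy, rfl⟩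
    rcases lt_or_gt_of_ne hxy with h | h
    · exact key x y h
    · rw [Equiv.swap_comm]; exact key y x h


end Stmt1
end

section
/- The assignment g1 -> (1 2), g1' -> (1 2), g2 -> (1 3), g3 -> (2 3), g4 -> (2 4), g5 -> (1 5) respects all the defining relations of G_I and hence extends to a group homomorphism rho : G_I -> S_5, and this homomorphism is surjective. -/
namespace Stmt4

/-- Generators: `0 ↦ g1`, `1 ↦ g1'`, `2 ↦ g2`, `3 ↦ g3`, `4 ↦ g4`, `5 ↦ g5`. -/
def g (i : Fin 6) : FreeGroup (Fin 6) := FreeGroup.of i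

/-- The braid relator `x y x (y x y)⁻¹`, i.e. `<x,y> = e`. -/
def braid (x y : FreeGroup (Fin 6)) : FreeGroup (Fin 6) := x * y * x * (y * x * y)⁻¹

/-- The commutator relator `x y x⁻¹ y⁻¹`, i.e. `[x,y] = e`. -/
def comm (x y : FreeGroup (Fin 6)) : FreeGroup (Fin 6) := x * y * x⁻¹ * y⁻¹

/-- Relators of the group `G_I` from Theorem 3.4 (union of the Cayley cubic degeneration
and two planes, Type I).  Here `g 0 = g1`, `g 1 = g1'`, `g 2 = g2`, `g 3 = g3`,
`g 4 = g4`, `g 5 = g5`. -/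
def rels : Set (FreeGroup (Fin 6)) :=
  { (g 0) ^ 2, (g 1) ^ 2, (g 2) ^ 2, (g 3) ^ 2, (g 4) ^ 2, (g 5) ^ 2,
    comm (g 2) (g 4), comm (g 3) (g 5), comm (g 4) (g 5),
    braid (g 0) (g 2), braid (g 0) (g 4), braid (g 0) (g 5),
    braid (g 1) (g 2), braid (g 1) (g 4), braid (g 1) (g 5),
    braid (g 2) (g 3), braid (g 2) (g 5), braid (g 3) (g 4),
    comm (g 0) ((g 2)⁻¹ * g 3 * g 2), comm (g 1) ((g 2)⁻¹ * g 3 * g 2) }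

/-- The presented group `G_I`. -/
abbrev GI := PresentedGroup rels

def f : Fin 6 → Equiv.Perm (Fin 5) :=
  ![Equiv.swap 0 1, Equiv.swap 0 1, Equiv.swap 0 2, Equiv.swap 1 2, Equiv.swap 1 3, Equiv.swap 0 4]

lemma hrels : ∀ r ∈ rels, FreeGroup.lift f r = 1 := by
  intro r hr
  simp only [rels, Set.mem_insert_iff, Set.mem_singleton_iff] at hr
  rcases hr with h|h|h|h|h|h|h|h|h|h|h|h|h|h|h|h|h|h|h|h <;> subst h <;>
    simp only [g, braid, comm, map_mul, map_inv, map_pow, FreeGroup.lift_apply_of, f] <;> decide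

/-- Theorem 3.4 (first step): the assignment `g1 ↦ (1 2)`, `g1' ↦ (1 2)`, `g2 ↦ (1 3)`,
`g3 ↦ (2 3)`, `g4 ↦ (2 4)`, `g5 ↦ (1 5)` extends to a group homomorphism
`ρ : G_I → S₅`, which is surjective. -/
theorem exists_surjective_hom :
    ∃ ρ : GI →* Equiv.Perm (Fin 5),
      ρ (PresentedGroup.of 0) = Equiv.swap 0 1 ∧
      ρ (PresentedGroup.of 1) = Equiv.swap 0 1 ∧
      ρ (PresentedGroup.of 2) = Equiv.swap 0 2 ∧
      ρ (PresentedGroup.of 3) = Equiv.swap 1 2 ∧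
      ρ (PresentedGroup.of 4) = Equiv.swap 1 3 ∧
      ρ (PresentedGroup.of 5) = Equiv.swap 0 4 ∧
      Function.Surjective ρ := by
  refine ⟨PresentedGroup.toGroup hrels, PresentedGroup.toGroup.of hrels,
    PresentedGroup.toGroup.of hrels, PresentedGroup.toGroup.of hrels,
    PresentedGroup.toGroup.of hrels, PresentedGroup.toGroup.of hrels,
    PresentedGroup.toGroup.of hrels, ?_⟩
  set ρ := PresentedGroup.toGroup hrels with hρ
  have hmem : ∀ i : Fin 6, f i ∈ ρ.range := fun i =>
    ⟨PresentedGroup.of i, PresentedGroup.toGroup.of hrels⟩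
  have ha : Equiv.swap (0:Fin 5) 1 ∈ ρ.range := hmem 0
  have hb : Equiv.swap (0:Fin 5) 2 ∈ ρ.range := hmem 2
  have hc : Equiv.swap (1:Fin 5) 2 ∈ ρ.range := hmem 3
  have hd : Equiv.swap (1:Fin 5) 3 ∈ ρ.range := hmem 4
  have hf : Equiv.swap (0:Fin 5) 4 ∈ ρ.range := hmem 5
  have t03 : Equiv.swap (0:Fin 5) 3 ∈ ρ.range := by
    have := mul_mem (mul_mem hd ha) hd; convert this using 1; decide
  have t14 : Equiv.swap (1:Fin 5) 4 ∈ ρ.range := by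
    have := mul_mem (mul_mem ha hf) ha; convert this using 1; decide
  have t23 : Equiv.swap (2:Fin 5) 3 ∈ ρ.range := by
    have := mul_mem (mul_mem hc hd) hc; convert this using 1; decide
  have t24 : Equiv.swap (2:Fin 5) 4 ∈ ρ.range := by
    have := mul_mem (mul_mem hb hf) hb; convert this using 1; decide
  have t34 : Equiv.swap (3:Fin 5) 4 ∈ ρ.range := by
    have := mul_mem (mul_mem hd t14) hd; convert this using 1; decide
  rw [← MonoidHom.range_eq_top, eq_top_iff, ← Equiv.Perm.closure_isSwap,
    Subgroup.closure_le]
  rintro σ ⟨a, b, hab, rfl⟩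
  fin_cases a <;> fin_cases b <;>
    first
      | exact ha | exact hb | exact hc | exact hd | exact hf
      | exact t03 | exact t14 | exact t23 | exact t24 | exact t34
      | (rw [Equiv.swap_comm];
         first
           | exact ha | exact hb | exact hc | exact hd | exact hf
           | exact t03 | exact t14 | exact t23 | exact t24 | exact t34)
      | exact absurd rfl hab

end Stmt4
end

section
/- Let Q be the presented group defined in the context (arising from the 4-point quintic degeneration, Theorem 3.8). Then Q is isomorphic to the symmetric group S_5. (Consequently, in the paper's setting, the fundamental group of the Galois cover of a surface with a 4-point quintic degeneration is trivial.) -/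
namespace Stmt12

/-- Generators: `i ↦ g(i+1)` for `i = 0,…,3`. -/
def g (i : Fin 4) : FreeGroup (Fin 4) := FreeGroup.of i

/-- The braid relator `x y x (y x y)⁻¹`, i.e. `<x,y> = e`. -/
def braid (x y : FreeGroup (Fin 4)) : FreeGroup (Fin 4) := x * y * x * (y * x * y)⁻¹

/-- The commutator relator `x y x⁻¹ y⁻¹`, i.e. `[x,y] = e`. -/
def comm (x y : FreeGroup (Fin 4)) : FreeGroup (Fin 4) := x * y * x⁻¹ * y⁻¹

/-- Relators of the group `Q` from Theorem 3.8 (the 4-point quintic degeneration). -/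
def rels : Set (FreeGroup (Fin 4)) :=
  { (g 0) ^ 2, (g 1) ^ 2, (g 2) ^ 2, (g 3) ^ 2,
    comm (g 0) (g 2), comm (g 1) (g 2), comm (g 1 * g 0 * g 1) (g 3),
    braid (g 0) (g 1), braid (g 1) (g 3), braid (g 2) (g 3) }

/-- The presented group `Q`. -/
abbrev Q := PresentedGroup rels


lemma relq {r : FreeGroup (Fin 4)} (h : r ∈ rels) : (PresentedGroup.mk rels) r = 1 :=
  (QuotientGroup.eq_one_iff r).mpr (Subgroup.subset_normalClosure h)

def a : Q := PresentedGroup.of 0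
def b : Q := PresentedGroup.of 1
def c : Q := PresentedGroup.of 2
def d : Q := PresentedGroup.of 3

lemma haa : a * a = 1 := by
  have h := relq (show (g 0)^2 ∈ rels by simp [rels])
  rw [map_pow, sq] at h; exact h
lemma hbb : b * b = 1 := by
  have h := relq (show (g 1)^2 ∈ rels by simp [rels])
  rw [map_pow, sq] at h; exact h
lemma hcc : c * c = 1 := by
  have h := relq (show (g 2)^2 ∈ rels by simp [rels])
  rw [map_pow, sq] at h; exact h
lemma hdd : d * d = 1 := by
  have h := relq (show (g 3)^2 ∈ rels by simp [rels])
  rw [map_pow, sq] at h; exact h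
lemma hac : a * c = c * a := by
  have h := relq (show comm (g 0) (g 2) ∈ rels by simp [rels])
  simp only [comm, map_mul, map_inv] at h
  rw [mul_inv_eq_one, mul_inv_eq_iff_eq_mul] at h; exact h
lemma hbc : b * c = c * b := by
  have h := relq (show comm (g 1) (g 2) ∈ rels by simp [rels])
  simp only [comm, map_mul, map_inv] at h
  rw [mul_inv_eq_one, mul_inv_eq_iff_eq_mul] at h; exact h
lemma hbabd : b * a * b * d = d * (b * a * b) := by
  have h := relq (show comm (g 1 * g 0 * g 1) (g 3) ∈ rels by simp [rels])
  simp only [comm, map_mul, map_inv] at h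
  rw [mul_inv_eq_one, mul_inv_eq_iff_eq_mul] at h; exact h
lemma hab : a * b * a = b * a * b := by
  have h := relq (show braid (g 0) (g 1) ∈ rels by simp [rels])
  simp only [braid, map_mul, map_inv] at h
  rw [mul_inv_eq_one] at h; exact h
lemma hbd : b * d * b = d * b * d := by
  have h := relq (show braid (g 1) (g 3) ∈ rels by simp [rels])
  simp only [braid, map_mul, map_inv] at h
  rw [mul_inv_eq_one] at h; exact h
lemma hcd : c * d * c = d * c * d := by
  have h := relq (show braid (g 2) (g 3) ∈ rels by simp [rels])
  simp only [braid, map_mul, map_inv] at h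
  rw [mul_inv_eq_one] at h; exact h

lemma sq_a : ∀ y : Q, a * (a * y) = y := fun y => by rw [← mul_assoc, haa, one_mul]
lemma sq_b : ∀ y : Q, b * (b * y) = y := fun y => by rw [← mul_assoc, hbb, one_mul]
lemma sq_c : ∀ y : Q, c * (c * y) = y := fun y => by rw [← mul_assoc, hcc, one_mul]
lemma sq_d : ∀ y : Q, d * (d * y) = y := fun y => by rw [← mul_assoc, hdd, one_mul]
lemma co_ac : ∀ y : Q, a * (c * y) = c * (a * y) := fun y => by
  rw [← mul_assoc, hac, mul_assoc]
lemma co_bc : ∀ y : Q, b * (c * y) = c * (b * y) := fun y => by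
  rw [← mul_assoc, hbc, mul_assoc]
lemma br_ab : ∀ y : Q, a * (b * (a * y)) = b * (a * (b * y)) := fun y => by
  simp only [← mul_assoc]; rw [hab]
lemma br_bd : ∀ y : Q, b * (d * (b * y)) = d * (b * (d * y)) := fun y => by
  simp only [← mul_assoc]; rw [hbd]
lemma br_cd : ∀ y : Q, c * (d * (c * y)) = d * (c * (d * y)) := fun y => by
  simp only [← mul_assoc]; rw [hcd]
lemma co_bab : ∀ y : Q, b * (a * (b * (d * y))) = d * (b * (a * (b * y))) := fun y => by
  simp only [← mul_assoc]; rw [hbabd]; simp only [mul_assoc]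

/-- `e = s₃` : the fourth Coxeter generator. -/
def ee : Q := d * b * d

lemma sq_e : ∀ y : Q, ee * (ee * y) = y := fun y => by
  simp only [ee, mul_assoc]; rw [sq_d, sq_b, sq_d]
lemma ebe : ∀ y : Q, ee * (b * (ee * y)) = d * y := fun y => by
  simp only [ee, mul_assoc]; rw [br_bd, sq_d, sq_d, sq_b]
lemma br_be : ∀ y : Q, b * (ee * (b * y)) = ee * (b * (ee * y)) := fun y => by
  rw [ebe]; simp only [ee, mul_assoc]; rw [br_bd, sq_d, sq_b]
lemma co_ae : ∀ y : Q, a * (ee * y) = ee * (a * y) := by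
  intro y
  have h1 : b * (a * (b * (d * (b * y)))) = b * (b * (d * (b * (a * y)))) := by
    rw [co_bab, sq_b, sq_b]
  have h2 := mul_left_cancel h1
  simp only [ee, mul_assoc]
  rw [← br_bd, h2, br_bd]
lemma br_ce : ∀ y : Q, ee * (c * (ee * y)) = c * (ee * (c * y)) := fun y => by
  simp only [ee, mul_assoc]
  rw [← br_cd, ← co_bc, co_bc, br_bd, ← br_cd, ← co_bc, ← br_cd, sq_c]
lemma hee : ee * ee = 1 := by have h := sq_e 1; rwa [mul_one] at h
lemma hd_ebe : ee * (b * ee) = d := by have h := ebe 1; rwa [mul_one, mul_one] at h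

lemma cover_of_closure {G : Type*} [Group G] {S : Set G} {H : Subgroup G} {T : Set G}
    (h1 : (1:G) ∈ T)
    (hinv : ∀ g ∈ S, g⁻¹ ∈ S)
    (hstep : ∀ t ∈ T, ∀ g ∈ S, ∃ h ∈ H, ∃ t' ∈ T, t * g = h * t') :
    ∀ x ∈ Subgroup.closure S, ∃ h ∈ H, ∃ t ∈ T, x = h * t := by
  intro x hx
  have hx' : x ∈ Submonoid.closure (S ∪ S⁻¹) := by
    rw [← Subgroup.closure_toSubmonoid S] at *; exact hx
  obtain ⟨l, hl, rfl⟩ := Submonoid.exists_list_of_mem_closure hx'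
  clear hx hx'
  induction l using List.reverseRecOn with
  | nil => exact ⟨1, one_mem _, 1, h1, by simp⟩
  | append_singleton l gg ih =>
    have hg : gg ∈ S := by
      rcases hl gg (by simp) with h | h
      · exact h
      · simpa using hinv _ (Set.mem_inv.mp h)
    obtain ⟨h, hh, t, ht, heq⟩ := ih (fun y hy => hl y (List.mem_append_left _ hy))
    obtain ⟨h', hh', t', ht', heq'⟩ := hstep t ht gg hg
    refine ⟨h * h', mul_mem hh hh', t', ht', ?_⟩
    rw [List.prod_append, List.prod_singleton, heq, mul_assoc, heq', ← mul_assoc]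

lemma ia : a⁻¹ = a := inv_eq_of_mul_eq_one_right haa
lemma ib : b⁻¹ = b := inv_eq_of_mul_eq_one_right hbb
lemma ic : c⁻¹ = c := inv_eq_of_mul_eq_one_right hcc
lemma ie : ee⁻¹ = ee := inv_eq_of_mul_eq_one_right hee

def C1 : Subgroup Q := Subgroup.closure {a}
def C2 : Subgroup Q := Subgroup.closure {a, b}
def C3 : Subgroup Q := Subgroup.closure {a, b, ee}

lemma cover1 : ∀ x ∈ C1, ∃ h ∈ (⊥ : Subgroup Q), ∃ t ∈ ({1, a} : Set Q), x = h * t := by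
  refine cover_of_closure (by simp) ?_ ?_
  · rintro g' rfl; simp [ia]
  · rintro t ht g' rfl
    simp only [Set.mem_insert_iff, Set.mem_singleton_iff] at ht
    rcases ht with rfl | rfl
    · exact ⟨1, one_mem _, a, by simp, by simp⟩
    · exact ⟨1, one_mem _, 1, by simp, by simp [haa]⟩

lemma cover2 : ∀ x ∈ C2, ∃ h ∈ C1, ∃ t ∈ ({1, b, b*a} : Set Q), x = h * t := by
  have hmem : a ∈ C1 := Subgroup.subset_closure (by simp)
  refine cover_of_closure (by simp) ?_ ?_
  · rintro g' (rfl | rfl) <;> simp [ia, ib]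
  · rintro t ht g' hg
    simp only [Set.mem_insert_iff, Set.mem_singleton_iff] at ht hg
    rcases ht with rfl | rfl | rfl <;> rcases hg with rfl | rfl
    · exact ⟨a, hmem, 1, by simp, by simp⟩
    · exact ⟨1, one_mem _, b, by simp, by simp⟩
    · exact ⟨1, one_mem _, b*a, by simp, by simp⟩
    · exact ⟨1, one_mem _, 1, by simp, by simp [hbb]⟩
    · exact ⟨1, one_mem _, b, by simp, by simp [mul_assoc, haa]⟩
    · refine ⟨a, hmem, b*a, by simp, ?_⟩
      have k := br_ab 1
      simp only [mul_one] at k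
      simp only [mul_assoc]
      exact k.symm

lemma cover3 : ∀ x ∈ C3, ∃ h ∈ C2, ∃ t ∈ ({1, ee, ee*b, ee*b*a} : Set Q), x = h * t := by
  have ham : a ∈ C2 := Subgroup.subset_closure (by simp)
  have hbm : b ∈ C2 := Subgroup.subset_closure (by simp)
  refine cover_of_closure (by simp) ?_ ?_
  · rintro g' (rfl | rfl | rfl) <;> simp [ia, ib, ie]
  · rintro t ht g' hg
    simp only [Set.mem_insert_iff, Set.mem_singleton_iff] at ht hg
    rcases ht with rfl | rfl | rfl | rfl <;> rcases hg with rfl | rfl | rfl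
    · exact ⟨a, ham, 1, by simp, by simp⟩
    · exact ⟨b, hbm, 1, by simp, by simp⟩
    · exact ⟨1, one_mem _, ee, by simp, by simp⟩
    · refine ⟨a, ham, ee, by simp, ?_⟩
      have k := co_ae 1; simp only [mul_one] at k; exact k.symm
    · exact ⟨1, one_mem _, ee*b, by simp, by simp⟩
    · exact ⟨1, one_mem _, 1, by simp, by simp [hee]⟩
    · exact ⟨1, one_mem _, ee*b*a, by simp, by simp [mul_assoc]⟩
    · exact ⟨1, one_mem _, ee, by simp, by simp [mul_assoc, hbb]⟩
    · refine ⟨b, hbm, ee*b, by simp, ?_⟩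
      have k := br_be 1; simp only [mul_one] at k
      simp only [mul_assoc]; exact k.symm
    · exact ⟨1, one_mem _, ee*b, by simp, by simp [mul_assoc, haa]⟩
    · refine ⟨a, ham, ee*b*a, by simp, ?_⟩
      have k : ∀ y : Q, ee * (b * (a * (b * y))) = a * (ee * (b * (a * y))) := by
        intro y; rw [← br_ab, ← co_ae]
      have k1 := k 1; simp only [mul_one] at k1
      simp only [mul_assoc]; exact k1
    · refine ⟨b, hbm, ee*b*a, by simp, ?_⟩
      have k : ∀ y : Q, ee * (b * (a * (ee * y))) = b * (ee * (b * (a * y))) := by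
        intro y; rw [co_ae, ← br_be]
      have k1 := k 1; simp only [mul_one] at k1
      simp only [mul_assoc]; exact k1

lemma cover4 : ∀ x ∈ Subgroup.closure ({a, b, ee, c} : Set Q),
    ∃ h ∈ C3, ∃ t ∈ ({1, c, c*ee, c*ee*b, c*ee*b*a} : Set Q), x = h * t := by
  have ham : a ∈ C3 := Subgroup.subset_closure (by simp)
  have hbm : b ∈ C3 := Subgroup.subset_closure (by simp)
  have hem : ee ∈ C3 := Subgroup.subset_closure (by simp)
  refine cover_of_closure (by simp) ?_ ?_
  · rintro g' (rfl | rfl | rfl | rfl) <;> simp [ia, ib, ie, ic]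
  · rintro t ht g' hg
    simp only [Set.mem_insert_iff, Set.mem_singleton_iff] at ht hg
    rcases ht with rfl | rfl | rfl | rfl | rfl <;> rcases hg with rfl | rfl | rfl | rfl
    · exact ⟨a, ham, 1, by simp, by simp⟩
    · exact ⟨b, hbm, 1, by simp, by simp⟩
    · exact ⟨ee, hem, 1, by simp, by simp⟩
    · exact ⟨1, one_mem _, c, by simp, by simp⟩
    · refine ⟨a, ham, c, by simp, ?_⟩
      have k := co_ac 1; simp only [mul_one] at k; exact k.symm
    · refine ⟨b, hbm, c, by simp, ?_⟩
      have k := co_bc 1; simp only [mul_one] at k; exact k.symm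
    · exact ⟨1, one_mem _, c*ee, by simp, by simp⟩
    · exact ⟨1, one_mem _, 1, by simp, by simp [hcc]⟩
    · refine ⟨a, ham, c*ee, by simp, ?_⟩
      have k : ∀ y : Q, c * (ee * (a * y)) = a * (c * (ee * y)) := by
        intro y; rw [← co_ae, ← co_ac]
      have k1 := k 1; simp only [mul_one] at k1
      simp only [mul_assoc]; exact k1
    · exact ⟨1, one_mem _, c*ee*b, by simp, by simp [mul_assoc]⟩
    · exact ⟨1, one_mem _, c, by simp, by simp [mul_assoc, hee]⟩
    · refine ⟨ee, hem, c*ee, by simp, ?_⟩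
      have k := br_ce 1; simp only [mul_one] at k
      simp only [mul_assoc]; exact k.symm
    · exact ⟨1, one_mem _, c*ee*b*a, by simp, by simp [mul_assoc]⟩
    · exact ⟨1, one_mem _, c*ee, by simp, by simp [mul_assoc, hbb]⟩
    · refine ⟨b, hbm, c*ee*b, by simp, ?_⟩
      have k : ∀ y : Q, c * (ee * (b * (ee * y))) = b * (c * (ee * (b * y))) := by
        intro y; rw [← br_be, ← co_bc]
      have k1 := k 1; simp only [mul_one] at k1
      simp only [mul_assoc]; exact k1
    · refine ⟨ee, hem, c*ee*b, by simp, ?_⟩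
      have k : ∀ y : Q, c * (ee * (b * (c * y))) = ee * (c * (ee * (b * y))) := by
        intro y; rw [co_bc, ← br_ce]
      have k1 := k 1; simp only [mul_one] at k1
      simp only [mul_assoc]; exact k1
    · exact ⟨1, one_mem _, c*ee*b, by simp, by simp [mul_assoc, haa]⟩
    · refine ⟨a, ham, c*ee*b*a, by simp, ?_⟩
      have k : ∀ y : Q, c * (ee * (b * (a * (b * y)))) = a * (c * (ee * (b * (a * y)))) := by
        intro y; rw [← br_ab, ← co_ae, ← co_ac]
      have k1 := k 1; simp only [mul_one] at k1
      simp only [mul_assoc]; exact k1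
    · refine ⟨b, hbm, c*ee*b*a, by simp, ?_⟩
      have k : ∀ y : Q, c * (ee * (b * (a * (ee * y)))) = b * (c * (ee * (b * (a * y)))) := by
        intro y; rw [co_ae, ← br_be, ← co_bc]
      have k1 := k 1; simp only [mul_one] at k1
      simp only [mul_assoc]; exact k1
    · refine ⟨ee, hem, c*ee*b*a, by simp, ?_⟩
      have k : ∀ y : Q, c * (ee * (b * (a * (c * y)))) = ee * (c * (ee * (b * (a * y)))) := by
        intro y; rw [co_ac, co_bc, ← br_ce]
      have k1 := k 1; simp only [mul_one] at k1
      simp only [mul_assoc]; exact k1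

lemma htop : Subgroup.closure ({a, b, ee, c} : Set Q) = ⊤ := by
  rw [eq_top_iff]
  intro x _
  refine PresentedGroup.generated_by rels _ (fun j => ?_) x
  fin_cases j
  · exact Subgroup.subset_closure (by simp [a])
  · exact Subgroup.subset_closure (by simp [b])
  · exact Subgroup.subset_closure (by simp [c])
  · show d ∈ _
    rw [← hd_ebe]
    have hem : ee ∈ Subgroup.closure ({a, b, ee, c} : Set Q) := Subgroup.subset_closure (by simp)
    have hbm : b ∈ Subgroup.closure ({a, b, ee, c} : Set Q) := Subgroup.subset_closure (by simp)
    exact mul_mem hem (mul_mem hbm hem)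

def v1 : Fin 2 → Q := ![1, a]
def v2 : Fin 3 → Q := ![1, b, b*a]
def v3 : Fin 4 → Q := ![1, ee, ee*b, ee*b*a]
def v4 : Fin 5 → Q := ![1, c, c*ee, c*ee*b, c*ee*b*a]

def f5 : Fin 2 × Fin 3 × Fin 4 × Fin 5 → Q :=
  fun p => v1 p.1 * v2 p.2.1 * v3 p.2.2.1 * v4 p.2.2.2

lemma f5_surj : Function.Surjective f5 := by
  intro x
  obtain ⟨h3, hh3, t4, ht4, rfl⟩ := cover4 x (by rw [htop]; trivial)
  obtain ⟨h2, hh2, t3, ht3, rfl⟩ := cover3 h3 hh3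
  obtain ⟨h1, hh1, t2, ht2, rfl⟩ := cover2 h2 hh2
  obtain ⟨h0, hh0, t1, ht1, rfl⟩ := cover1 h1 hh1
  rw [Subgroup.mem_bot] at hh0
  subst hh0
  have e1 : ∃ i : Fin 2, v1 i = t1 := by
    simp only [Set.mem_insert_iff, Set.mem_singleton_iff] at ht1
    rcases ht1 with rfl | rfl
    exacts [⟨0, rfl⟩, ⟨1, rfl⟩]
  have e2 : ∃ i : Fin 3, v2 i = t2 := by
    simp only [Set.mem_insert_iff, Set.mem_singleton_iff] at ht2
    rcases ht2 with rfl | rfl | rfl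
    exacts [⟨0, rfl⟩, ⟨1, rfl⟩, ⟨2, rfl⟩]
  have e3 : ∃ i : Fin 4, v3 i = t3 := by
    simp only [Set.mem_insert_iff, Set.mem_singleton_iff] at ht3
    rcases ht3 with rfl | rfl | rfl | rfl
    exacts [⟨0, rfl⟩, ⟨1, rfl⟩, ⟨2, rfl⟩, ⟨3, rfl⟩]
  have e4 : ∃ i : Fin 5, v4 i = t4 := by
    simp only [Set.mem_insert_iff, Set.mem_singleton_iff] at ht4
    rcases ht4 with rfl | rfl | rfl | rfl | rfl
    exacts [⟨0, rfl⟩, ⟨1, rfl⟩, ⟨2, rfl⟩, ⟨3, rfl⟩, ⟨4, rfl⟩]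
  obtain ⟨i1, rfl⟩ := e1
  obtain ⟨i2, rfl⟩ := e2
  obtain ⟨i3, rfl⟩ := e3
  obtain ⟨i4, rfl⟩ := e4
  exact ⟨(i1, i2, i3, i4), by simp [f5, one_mul]⟩

instance : Finite Q := Finite.of_surjective f5 f5_surj

lemma cardQ_le : Nat.card Q ≤ 120 := by
  have h := Nat.card_le_card_of_surjective f5 f5_surj
  simpa [Nat.card_eq_fintype_card] using h

def f0 : Fin 4 → Equiv.Perm (Fin 5) :=
  ![Equiv.swap 0 1, Equiv.swap 1 2, Equiv.swap 3 4, Equiv.swap 1 3]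

lemma hf0 : ∀ r ∈ rels, FreeGroup.lift f0 r = 1 := by
  intro r hr
  simp only [rels, Set.mem_insert_iff, Set.mem_singleton_iff] at hr
  rcases hr with rfl | rfl | rfl | rfl | rfl | rfl | rfl | rfl | rfl | rfl <;>
    simp only [g, braid, comm, map_mul, map_inv, map_pow, FreeGroup.lift_apply_of] <;> decide

def φ : Q →* Equiv.Perm (Fin 5) := PresentedGroup.toGroup hf0

lemma φa : φ a = Equiv.swap 0 1 := PresentedGroup.toGroup.of hf0
lemma φb : φ b = Equiv.swap 1 2 := PresentedGroup.toGroup.of hf0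
lemma φc : φ c = Equiv.swap 3 4 := PresentedGroup.toGroup.of hf0
lemma φd : φ d = Equiv.swap 1 3 := PresentedGroup.toGroup.of hf0

lemma φ_surj : Function.Surjective φ := by
  rw [← MonoidHom.range_eq_top, eq_top_iff, ← Equiv.Perm.closure_isSwap,
    Subgroup.closure_le]
  have m01 : Equiv.swap 0 1 ∈ φ.range := ⟨a, φa⟩
  have m12 : Equiv.swap 1 2 ∈ φ.range := ⟨b, φb⟩
  have m34 : Equiv.swap 3 4 ∈ φ.range := ⟨c, φc⟩
  have m13 : Equiv.swap 1 3 ∈ φ.range := ⟨d, φd⟩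
  have m02 : Equiv.swap 0 2 ∈ φ.range := ⟨a*b*a, by simp [map_mul, φa, φb]; decide⟩
  have m23 : Equiv.swap 2 3 ∈ φ.range := ⟨b*d*b, by simp [map_mul, φb, φd]; decide⟩
  have m03 : Equiv.swap 0 3 ∈ φ.range := ⟨a*d*a, by simp [map_mul, φa, φd]; decide⟩
  have m04 : Equiv.swap 0 4 ∈ φ.range := ⟨a*d*a*c*(a*d*a), by simp [map_mul, φa, φc, φd]; decide⟩
  have m14 : Equiv.swap 1 4 ∈ φ.range := ⟨d*c*d, by simp [map_mul, φc, φd]; decide⟩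
  have m24 : Equiv.swap 2 4 ∈ φ.range := ⟨b*d*b*c*(b*d*b), by simp [map_mul, φb, φc, φd]; decide⟩
  rintro σ ⟨x, y, hxy, rfl⟩
  fin_cases x <;> fin_cases y <;>
    first
      | exact absurd rfl hxy
      | exact m01 | exact m12 | exact m34 | exact m13 | exact m02 | exact m23
      | exact m03 | exact m04 | exact m14 | exact m24
      | (rw [Equiv.swap_comm]
         first
           | exact m01 | exact m12 | exact m34 | exact m13 | exact m02 | exact m23
           | exact m03 | exact m04 | exact m14 | exact m24)

lemma hcard : Nat.card Q = Nat.card (Equiv.Perm (Fin 5)) := by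
  have h1 : Nat.card (Equiv.Perm (Fin 5)) = 120 := by
    rw [Nat.card_eq_fintype_card, Fintype.card_perm, Fintype.card_fin]
    norm_num [Nat.factorial]
  have h2 := Nat.card_le_card_of_surjective φ φ_surj
  have h3 := cardQ_le
  omega


/-- Theorem 3.8 (group-theoretic content): `Q ≅ S₅`. -/
theorem Q_iso_S5 : Nonempty (Q ≃* Equiv.Perm (Fin 5)) := by
  have hbij : Function.Bijective φ :=
    (Nat.bijective_iff_surjective_and_card φ).mpr ⟨φ_surj, hcard⟩
  exact ⟨MulEquiv.ofBijective φ hbij⟩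

end Stmt12
end
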